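/- arXiv:1909.01212 — 5 statements merged into one kernel-verified Lean document; each statement's English description precedes it below -/
import Mathlib

section
/- Let m > 0 and b > 1 be real numbers. Then (m/4)·√(1 + Φ(b))·I(b) ≥ m/2. In particular, the spatial limit of the Hayward mass of the family of ellipsoids x₁²+x₂²+x₃²/b² = a², which equals m_∞(b) = (m/4)·√(1 + Φ(b))·I(b), admits the uniform positive lower bound m/2 independent of the oblateness parameter b. -/
open Real MeasureTheory

/-- Φ(b) = (b²/√(b²−1))·arcsin(√(b²−1)/b). -/
noncomputable def Phi (b : ℝ) : ℝ :=
  b ^ 2 / Real.sqrt (b ^ 2 - 1) * Real.arcsin (Real.sqrt (b ^ 2 - 1) / b)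

/-- I(b) = ∫_0^π ((2b² − (b²−1)²·sin²θ·cos²θ)·sinθ) /
      (√(1+b²+(1−b²)·cos 2θ)·(b²·cos²θ + sin²θ)^{5/2}) dθ. -/
noncomputable def ellI (b : ℝ) : ℝ :=
  ∫ θ in (0:ℝ)..Real.pi,
    ((2 * b ^ 2 - (b ^ 2 - 1) ^ 2 * Real.sin θ ^ 2 * Real.cos θ ^ 2) * Real.sin θ) /
      (Real.sqrt (1 + b ^ 2 + (1 - b ^ 2) * Real.cos (2 * θ)) *
        (b ^ 2 * Real.cos θ ^ 2 + Real.sin θ ^ 2) ^ ((5:ℝ) / 2))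

lemma phi_ge (b : ℝ) (hb : 1 < b) : b ≤ Phi b := by
  have hb0 : 0 < b := by linarith
  have hk : 0 < b ^ 2 - 1 := by nlinarith
  have hs : 0 < Real.sqrt (b ^ 2 - 1) := Real.sqrt_pos.2 hk
  have hsb : Real.sqrt (b ^ 2 - 1) / b ≤ 1 := by
    rw [div_le_one hb0]
    calc Real.sqrt (b ^ 2 - 1) ≤ Real.sqrt (b ^ 2) := Real.sqrt_le_sqrt (by linarith)
    _ = b := by rw [Real.sqrt_sq hb0.le]
  have hx0 : 0 ≤ Real.sqrt (b ^ 2 - 1) / b := by positivity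
  have harc : Real.sqrt (b ^ 2 - 1) / b ≤ Real.arcsin (Real.sqrt (b ^ 2 - 1) / b) := by
    nth_rewrite 1 [← Real.sin_arcsin (by linarith : (-1:ℝ) ≤ _) hsb]
    exact Real.sin_le (Real.arcsin_nonneg.2 hx0)
  have := mul_le_mul_of_nonneg_left harc (by positivity : (0:ℝ) ≤ b ^ 2 / Real.sqrt (b ^ 2 - 1))
  calc b = b ^ 2 / Real.sqrt (b ^ 2 - 1) * (Real.sqrt (b ^ 2 - 1) / b) := by
        field_simp
    _ ≤ Phi b := this

set_option maxHeartbeats 1000000 in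
lemma pointwise_bound (b : ℝ) (hb : 1 < b) (θ : ℝ) (hθ : θ ∈ Set.Icc (0:ℝ) Real.pi) :
    Real.sin θ * (2*b^2 - (b^2-1)^2 * Real.cos θ ^ 2) / (Real.sqrt 2 * b) * (1 + (b^2-1) * Real.cos θ ^ 2) ^ (-(5:ℝ)/2)
    ≤ ((2 * b ^ 2 - (b ^ 2 - 1) ^ 2 * Real.sin θ ^ 2 * Real.cos θ ^ 2) * Real.sin θ) /
      (Real.sqrt (1 + b ^ 2 + (1 - b ^ 2) * Real.cos (2 * θ)) *
        (b ^ 2 * Real.cos θ ^ 2 + Real.sin θ ^ 2) ^ ((5:ℝ) / 2)) := by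
  obtain ⟨h0, hpi⟩ := hθ
  set s := Real.sin θ with hs
  set c := Real.cos θ with hc
  have hb0 : 0 < b := by linarith
  set k := b^2 - 1 with hk
  have hkpos : 0 < k := by nlinarith
  have hs0 : 0 ≤ s := Real.sin_nonneg_of_nonneg_of_le_pi h0 hpi
  have hs1 : s ≤ 1 := Real.sin_le_one θ
  have hsq : s ^ 2 = 1 - c ^ 2 := Real.sin_sq θ
  have hc2 : c ^ 2 ≤ 1 := by nlinarith [sq_nonneg s]
  have hAeq : b ^ 2 * c ^ 2 + s ^ 2 = 1 + k * c ^ 2 := by rw [hsq]; ring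
  have hApos : 0 < 1 + k * c ^ 2 := by nlinarith [sq_nonneg c]
  have hwarg : 1 + b ^ 2 + (1 - b ^ 2) * Real.cos (2 * θ) = 2*b^2 + 2*(1-b^2)*c^2 := by
    rw [Real.cos_two_mul]; ring
  have hr2 : Real.sqrt 2 * Real.sqrt 2 = 2 := Real.mul_self_sqrt (by norm_num)
  set w := Real.sqrt (1 + b ^ 2 + (1 - b ^ 2) * Real.cos (2 * θ)) with hw
  have hwpos : 0 < w := by
    apply Real.sqrt_pos.2; rw [hwarg]; nlinarith [sq_nonneg c]
  have hw_hi : w ≤ Real.sqrt 2 * b := by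
    have h1 : w ≤ Real.sqrt (2 * b^2) := by
      apply Real.sqrt_le_sqrt; rw [hwarg]; nlinarith [sq_nonneg c]
    calc w ≤ Real.sqrt (2 * b^2) := h1
      _ = Real.sqrt 2 * b := by
          rw [Real.sqrt_mul (by norm_num), Real.sqrt_sq hb0.le]
  have hw_lo : Real.sqrt 2 * b * s ≤ w := by
    have h1 : Real.sqrt (2 * b^2 * s^2) ≤ w := by
      apply Real.sqrt_le_sqrt; rw [hwarg]; nlinarith [sq_nonneg c]
    calc Real.sqrt 2 * b * s = Real.sqrt 2 * Real.sqrt (b^2) * Real.sqrt (s^2) := by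
          rw [Real.sqrt_sq hb0.le, Real.sqrt_sq hs0]
      _ = Real.sqrt (2 * b^2 * s^2) := by
          rw [← Real.sqrt_mul (by norm_num), ← Real.sqrt_mul (by positivity)]
      _ ≤ w := h1
  -- rewrite RHS
  rw [hAeq]
  set P := (1 + k * c ^ 2) ^ ((5:ℝ)/2) with hP
  have hPpos : 0 < P := Real.rpow_pos_of_pos hApos _
  have hPneg : (1 + k * c ^ 2) ^ (-(5:ℝ)/2) = P⁻¹ := by
    rw [hP, ← Real.rpow_neg hApos.le]; norm_num
  rw [hPneg]
  have hRHS : ((2 * b ^ 2 - k ^ 2 * s ^ 2 * c ^ 2) * s) / (w * P)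
      = ((2 * b ^ 2 - k ^ 2 * s ^ 2 * c ^ 2) * s / w) * P⁻¹ := by
    field_simp
  rw [hRHS]
  clear_value s c k w P
  apply mul_le_mul_of_nonneg_right _ (by positivity : (0:ℝ) ≤ P⁻¹)
  -- core inequality
  rw [div_le_div_iff₀ (by positivity) hwpos]
  -- goal : s * (2*b^2 - k^2*c^2) * w ≤ (2*b^2 - k^2*s^2*c^2) * s * (Real.sqrt 2 * b)
  rcases le_or_gt 0 (s * (2*b^2 - k^2*c^2)) with hM | hM
  · calc s * (2*b^2 - k^2*c^2) * w ≤ s * (2*b^2 - k^2*c^2) * (Real.sqrt 2 * b) :=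
        mul_le_mul_of_nonneg_left hw_hi hM
      _ ≤ (2 * b ^ 2 - k ^ 2 * s ^ 2 * c ^ 2) * s * (Real.sqrt 2 * b) := by
        apply mul_le_mul_of_nonneg_right _ (by positivity)
        nlinarith [mul_nonneg (mul_nonneg hs0 (sq_nonneg k)) (sq_nonneg c),
          mul_nonneg (mul_nonneg (mul_nonneg hs0 (sq_nonneg k)) (sq_nonneg c)) (sq_nonneg s)]
      _ = _ := rfl
  · calc s * (2*b^2 - k^2*c^2) * w ≤ s * (2*b^2 - k^2*c^2) * (Real.sqrt 2 * b * s) :=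
        mul_le_mul_of_nonpos_left hw_lo hM.le
      _ ≤ (2 * b ^ 2 - k ^ 2 * s ^ 2 * c ^ 2) * s * (Real.sqrt 2 * b) := by
        have h2 : 0 < Real.sqrt 2 * b := by positivity
        have h2bk : 0 ≤ 2*b^2 + k^2*c^2*s := by
          nlinarith [mul_nonneg (mul_nonneg (sq_nonneg k) (sq_nonneg c)) hs0]
        have hprod := mul_nonneg (mul_nonneg hs0 (by linarith : (0:ℝ) ≤ 1 - s)) h2bk
        have key : s * (2*b^2 - k^2*c^2) * s ≤ (2 * b ^ 2 - k ^ 2 * s ^ 2 * c ^ 2) * s := by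
          nlinarith [hprod]
        calc s * (2*b^2 - k^2*c^2) * (Real.sqrt 2 * b * s)
            = (s * (2*b^2 - k^2*c^2) * s) * (Real.sqrt 2 * b) := by ring
          _ ≤ _ := mul_le_mul_of_nonneg_right key h2.le

set_option maxHeartbeats 1000000 in
lemma ellI_ge (b : ℝ) (hb : 1 < b) : Real.sqrt 2 ≤ ellI b := by
  have hb0 : 0 < b := by linarith
  set k := b ^ 2 - 1 with hk
  have hkpos : 0 < k := by nlinarith
  set cF := -((2*b^2 + k)/(3 * Real.sqrt 2 * b)) with hcF
  set dF := -((4*b^2 - k)/(3 * Real.sqrt 2 * b)) with hdF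
  set F : ℝ → ℝ := fun θ =>
    cF * (Real.cos θ * (1 + k * Real.cos θ ^ 2) ^ (-(3:ℝ)/2))
      + dF * (Real.cos θ * (1 + k * Real.cos θ ^ 2) ^ (-(1:ℝ)/2)) with hF
  set h : ℝ → ℝ := fun θ =>
    Real.sin θ * (2*b^2 - k^2 * Real.cos θ ^ 2) / (Real.sqrt 2 * b)
      * (1 + k * Real.cos θ ^ 2) ^ (-(5:ℝ)/2) with hh
  set f : ℝ → ℝ := fun θ =>
    ((2 * b ^ 2 - k ^ 2 * Real.sin θ ^ 2 * Real.cos θ ^ 2) * Real.sin θ) /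
      (Real.sqrt (1 + b ^ 2 + (1 - b ^ 2) * Real.cos (2 * θ)) *
        (b ^ 2 * Real.cos θ ^ 2 + Real.sin θ ^ 2) ^ ((5:ℝ) / 2)) with hf
  have hApos : ∀ θ : ℝ, 0 < 1 + k * Real.cos θ ^ 2 := fun θ => by
    nlinarith [sq_nonneg (Real.cos θ)]
  -- derivative
  have hderiv : ∀ θ : ℝ, HasDerivAt F (h θ) θ := by
    intro θ
    have hAne : 1 + k * Real.cos θ ^ 2 ≠ 0 := ne_of_gt (hApos θ)
    have hA : HasDerivAt (fun θ : ℝ => 1 + k * Real.cos θ ^ 2)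
        (k * (2 * Real.cos θ ^ 1 * (-Real.sin θ))) θ :=
      (((Real.hasDerivAt_cos θ).pow 2).const_mul k).const_add 1
    have h3 := hA.rpow_const (p := -(3:ℝ)/2) (Or.inl hAne)
    have h1 := hA.rpow_const (p := -(1:ℝ)/2) (Or.inl hAne)
    have hc3 := (Real.hasDerivAt_cos θ).mul h3
    have hc1 := (Real.hasDerivAt_cos θ).mul h1
    have hd := (hc3.const_mul cF).add (hc1.const_mul dF)
    have heq : h θ =
        cF * (-Real.sin θ * (1 + k * Real.cos θ ^ 2) ^ (-(3:ℝ)/2) +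
          Real.cos θ * (k * (2 * Real.cos θ ^ 1 * (-Real.sin θ)) * (-(3:ℝ)/2) *
            (1 + k * Real.cos θ ^ 2) ^ (-(3:ℝ)/2 - 1)))
        + dF * (-Real.sin θ * (1 + k * Real.cos θ ^ 2) ^ (-(1:ℝ)/2) +
          Real.cos θ * (k * (2 * Real.cos θ ^ 1 * (-Real.sin θ)) * (-(1:ℝ)/2) *
            (1 + k * Real.cos θ ^ 2) ^ (-(1:ℝ)/2 - 1))) := by
      have e1 : (-(3:ℝ)/2 - 1) = -(5:ℝ)/2 := by norm_num
      have e2 : (-(1:ℝ)/2 - 1) = -(3:ℝ)/2 := by norm_num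
      rw [e1, e2]
      have r3 : (1 + k * Real.cos θ ^ 2) ^ (-(3:ℝ)/2)
          = (1 + k * Real.cos θ ^ 2) * (1 + k * Real.cos θ ^ 2) ^ (-(5:ℝ)/2) := by
        rw [show (-(3:ℝ)/2) = 1 + (-(5:ℝ)/2) by norm_num, Real.rpow_add (hApos θ), Real.rpow_one]
      have r1 : (1 + k * Real.cos θ ^ 2) ^ (-(1:ℝ)/2)
          = (1 + k * Real.cos θ ^ 2) * (1 + k * Real.cos θ ^ 2) ^ (-(3:ℝ)/2) := by
        rw [show (-(1:ℝ)/2) = 1 + (-(3:ℝ)/2) by norm_num, Real.rpow_add (hApos θ), Real.rpow_one]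
      rw [hh, hcF, hdF]
      simp only []
      rw [r1, r3]
      have hr2 : Real.sqrt 2 ≠ 0 := by positivity
      have hbne : b ≠ 0 := by positivity
      field_simp
      ring
    rw [heq]
    exact hd
  -- continuity of h
  have hrpow5 : Continuous fun x : ℝ => x ^ ((5:ℝ)/2) := by
    rw [continuous_iff_continuousAt]
    intro x
    exact Real.continuousAt_rpow_const x _ (Or.inr (by norm_num))
  have hcont_h : Continuous h := by
    apply Continuous.mul
    · fun_prop
    · rw [continuous_iff_continuousAt]
      intro x
      exact ContinuousAt.rpow_const (by fun_prop) (Or.inl (ne_of_gt (hApos x)))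
  have hint_h : IntervalIntegrable h volume 0 Real.pi :=
    hcont_h.intervalIntegrable 0 Real.pi
  -- continuity of f
  have hwpos : ∀ θ : ℝ, 0 < 1 + b ^ 2 + (1 - b ^ 2) * Real.cos (2 * θ) := by
    intro θ
    nlinarith [Real.neg_one_le_cos (2*θ), Real.cos_le_one (2*θ)]
  have hA2pos : ∀ θ : ℝ, 0 < b ^ 2 * Real.cos θ ^ 2 + Real.sin θ ^ 2 := by
    intro θ
    nlinarith [Real.sin_sq_add_cos_sq θ, sq_nonneg (Real.cos θ), sq_nonneg (Real.sin θ)]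
  have hcont_f : Continuous f := by
    apply Continuous.div
    · fun_prop
    · exact (Real.continuous_sqrt.comp (by fun_prop)).mul (hrpow5.comp (by fun_prop))
    · intro θ
      exact mul_ne_zero (ne_of_gt (Real.sqrt_pos.2 (hwpos θ)))
        (ne_of_gt (Real.rpow_pos_of_pos (hA2pos θ) _))
  have hint_f : IntervalIntegrable f volume 0 Real.pi :=
    hcont_f.intervalIntegrable 0 Real.pi
  -- pointwise bound
  have hpt : ∀ θ ∈ Set.Icc (0:ℝ) Real.pi, h θ ≤ f θ := by
    intro θ hθ
    simp only [hh, hf, hk]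
    exact pointwise_bound b hb θ hθ
  -- assemble
  have hmono : (∫ θ in (0:ℝ)..Real.pi, h θ) ≤ ∫ θ in (0:ℝ)..Real.pi, f θ :=
    intervalIntegral.integral_mono_on Real.pi_pos.le hint_h hint_f hpt
  have hftc : (∫ θ in (0:ℝ)..Real.pi, h θ) = F Real.pi - F 0 :=
    intervalIntegral.integral_eq_sub_of_hasDerivAt (fun θ _ => hderiv θ) hint_h
  have hEI : ellI b = ∫ θ in (0:ℝ)..Real.pi, f θ := by
    rw [ellI, hf, hk]
  have hval : Real.sqrt 2 ≤ F Real.pi - F 0 := by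
    have hb2 : (1:ℝ) + k * Real.cos Real.pi ^ 2 = b ^ 2 := by
      rw [Real.cos_pi, hk]; ring
    have hb2' : (1:ℝ) + k * Real.cos 0 ^ 2 = b ^ 2 := by
      rw [Real.cos_zero, hk]; ring
    have hp3 : ((b:ℝ)^2) ^ (-(3:ℝ)/2) = (b^3)⁻¹ := by
      rw [← Real.rpow_natCast b 2, ← Real.rpow_mul hb0.le,
        show ((2:ℕ):ℝ) * (-(3:ℝ)/2) = -(3:ℝ) by norm_num, Real.rpow_neg hb0.le,
        show ((3:ℝ)) = ((3:ℕ):ℝ) by norm_num, Real.rpow_natCast]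
    have hp1 : ((b:ℝ)^2) ^ (-(1:ℝ)/2) = b⁻¹ := by
      rw [← Real.rpow_natCast b 2, ← Real.rpow_mul hb0.le,
        show ((2:ℕ):ℝ) * (-(1:ℝ)/2) = -(1:ℝ) by norm_num, Real.rpow_neg hb0.le,
        Real.rpow_one]
    have hFval : F Real.pi - F 0 = Real.sqrt 2 * ((3*b^4 + 4*b^2 - 1)/(3*b^4)) := by
      rw [hF]
      simp only [Real.cos_pi, Real.cos_zero]
      rw [show (1:ℝ) + k * (-1:ℝ) ^ 2 = b ^ 2 by rw [hk]; ring,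
        show (1:ℝ) + k * (1:ℝ) ^ 2 = b ^ 2 by rw [hk]; ring, hp3, hp1, hcF, hdF, hk]
      have hr2 : Real.sqrt 2 * Real.sqrt 2 = 2 := Real.mul_self_sqrt (by norm_num)
      have hr2ne : Real.sqrt 2 ≠ 0 := by positivity
      have hbne : b ≠ 0 := by positivity
      field_simp
      linear_combination (1 - 4*b^2 - 3*b^4) * hr2
    rw [hFval]
    have hq : (1:ℝ) ≤ (3*b^4 + 4*b^2 - 1)/(3*b^4) := by
      rw [le_div_iff₀ (by positivity)]
      nlinarith
    nlinarith [Real.sqrt_nonneg 2, hq, Real.sq_sqrt (by norm_num : (0:ℝ) ≤ 2)]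
  calc Real.sqrt 2 ≤ F Real.pi - F 0 := hval
    _ = ∫ θ in (0:ℝ)..Real.pi, h θ := hftc.symm
    _ ≤ ∫ θ in (0:ℝ)..Real.pi, f θ := hmono
    _ = ellI b := hEI.symm

/-- The spatial limit (m/4)·√(1+Φ(b))·I(b) of the Hayward mass of the ellipsoids
admits the uniform lower bound m/2. -/
theorem hayward_limit_lower_bound (m b : ℝ) (hm : 0 < m) (hb : 1 < b) :
    m / 4 * Real.sqrt (1 + Phi b) * ellI b ≥ m / 2 := by
  have h1 : Real.sqrt 2 ≤ Real.sqrt (1 + Phi b) := by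
    apply Real.sqrt_le_sqrt
    have := phi_ge b hb
    linarith
  have h2 : Real.sqrt 2 ≤ ellI b := ellI_ge b hb
  have hr2 : Real.sqrt 2 * Real.sqrt 2 = 2 := Real.mul_self_sqrt (by norm_num)
  have h3 : 2 ≤ Real.sqrt (1 + Phi b) * ellI b := by
    calc (2:ℝ) = Real.sqrt 2 * Real.sqrt 2 := hr2.symm
      _ ≤ Real.sqrt (1 + Phi b) * ellI b :=
        mul_le_mul h1 h2 (Real.sqrt_nonneg 2) (Real.sqrt_nonneg _)
  have h4 := mul_le_mul_of_nonneg_left h3 (by linarith : (0:ℝ) ≤ m / 4)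
  calc m / 2 = m / 4 * 2 := by ring
    _ ≤ m / 4 * (Real.sqrt (1 + Phi b) * ellI b) := h4
    _ = m / 4 * Real.sqrt (1 + Phi b) * ellI b := by ring
end

section
/- For every real number b > 1, the definite integral ∫_0^1 (2b² − (b²−1)²·u²·(1−u²))/(b·((b²−1)·u² + 1)^{5/2}) du equals log(b + √(b²−1))/(b·√(b²−1)) + 1. -/
open Real MeasureTheory

/-- For b > 1,
∫_0^1 (2b² − (b²−1)²·u²·(1−u²)) / (b·((b²−1)·u² + 1)^{5/2}) du
  = log(b + √(b²−1))/(b·√(b²−1)) + 1. -/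
theorem integral_value (b : ℝ) (hb : 1 < b) :
    (∫ u in (0:ℝ)..1,
        (2 * b ^ 2 - (b ^ 2 - 1) ^ 2 * u ^ 2 * (1 - u ^ 2)) /
          (b * ((b ^ 2 - 1) * u ^ 2 + 1) ^ ((5:ℝ) / 2))) =
      Real.log (b + Real.sqrt (b ^ 2 - 1)) / (b * Real.sqrt (b ^ 2 - 1)) + 1 := by
  have hb0 : 0 < b := lt_trans one_pos hb
  set c : ℝ := b ^ 2 - 1 with hc_def
  have hc : 0 < c := by nlinarith
  have hb2 : b ^ 2 = c + 1 := by rw [hc_def]; ring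
  clear_value c
  set F : ℝ → ℝ := fun u =>
    Real.arsinh (Real.sqrt c * u) / (b * Real.sqrt c) +
      ((2 * c + 1) * u + c ^ 2 * u ^ 3) / (b * (c * u ^ 2 + 1) ^ ((3:ℝ)/2)) with hF
  have hsc : (0:ℝ) < Real.sqrt c := Real.sqrt_pos.mpr hc
  have key : ∀ u : ℝ, HasDerivAt F
      ((2 * b ^ 2 - c ^ 2 * u ^ 2 * (1 - u ^ 2)) / (b * (c * u ^ 2 + 1) ^ ((5:ℝ)/2))) u := by
    intro u
    have hq : (0:ℝ) < c * u ^ 2 + 1 := by positivity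
    have hqne : c * u ^ 2 + 1 ≠ 0 := ne_of_gt hq
    set s : ℝ := Real.sqrt (c * u ^ 2 + 1) with hs_def
    have hs0 : 0 < s := Real.sqrt_pos.mpr hq
    have hs : s ^ 2 = c * u ^ 2 + 1 := Real.sq_sqrt hq.le
    -- derivative of first part
    have h1 : HasDerivAt (fun u : ℝ => Real.arsinh (Real.sqrt c * u) / (b * Real.sqrt c))
        ((Real.sqrt (1 + (Real.sqrt c * u) ^ 2))⁻¹ * Real.sqrt c / (b * Real.sqrt c)) u := by
      have := ((Real.hasDerivAt_arsinh (Real.sqrt c * u)).comp u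
        ((hasDerivAt_id u).const_mul (Real.sqrt c))).div_const (b * Real.sqrt c)
      simpa [Function.comp] using this
    have e1 : (Real.sqrt (1 + (Real.sqrt c * u) ^ 2))⁻¹ * Real.sqrt c / (b * Real.sqrt c)
        = 1 / (b * s) := by
      rw [mul_pow, Real.sq_sqrt hc.le, add_comm (1:ℝ), hs_def]
      field_simp
    -- derivative of second part
    have hD : HasDerivAt (fun u : ℝ => b * (c * u ^ 2 + 1) ^ ((3:ℝ)/2))
        (b * (c * (2 * u) * ((3:ℝ)/2) * (c * u ^ 2 + 1) ^ ((3:ℝ)/2 - 1))) u := by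
      have hbase : HasDerivAt (fun u : ℝ => c * u ^ 2 + 1) (c * (2 * u)) u := by
        simpa using (((hasDerivAt_pow 2 u).const_mul c).add_const 1)
      exact (hbase.rpow_const (Or.inl hqne)).const_mul b
    have hN : HasDerivAt (fun u : ℝ => (2 * c + 1) * u + c ^ 2 * u ^ 3)
        ((2 * c + 1) + c ^ 2 * (3 * u ^ 2)) u := by
      exact (((hasDerivAt_id u).const_mul (2 * c + 1)).add
        ((hasDerivAt_pow 3 u).const_mul (c ^ 2))).congr_deriv (by norm_num)
    have hDne : b * (c * u ^ 2 + 1) ^ ((3:ℝ)/2) ≠ 0 := by positivity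
    have h2 := hN.div hD hDne
    have := h1.add h2
    refine this.congr_deriv ?_
    symm
    -- now algebra
    have e32 : (c * u ^ 2 + 1) ^ ((3:ℝ)/2) = (c * u ^ 2 + 1) * s := by
      rw [hs_def, Real.sqrt_eq_rpow,
        show ((3:ℝ)/2) = 1 + 1/2 by norm_num, Real.rpow_add hq, Real.rpow_one]
    have e12 : (c * u ^ 2 + 1) ^ ((3:ℝ)/2 - 1) = s := by
      rw [hs_def, Real.sqrt_eq_rpow]; norm_num
    have e52 : (c * u ^ 2 + 1) ^ ((5:ℝ)/2) = (c * u ^ 2 + 1) ^ 2 * s := by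
      rw [hs_def, Real.sqrt_eq_rpow, show ((5:ℝ)/2) = (2:ℝ) + 1/2 by norm_num,
        Real.rpow_add hq, Real.rpow_two]
    rw [e1, e52, e32, e12]
    rw [hb2, ← hs]
    have hbne : b ≠ 0 := ne_of_gt hb0
    have hsne : s ≠ 0 := ne_of_gt hs0
    field_simp
    linear_combination (-s^2 - 2 - 2*c - c*u^2 - 3*c^2*u^2) * hs
  have hcont : Continuous fun u : ℝ =>
      (2 * b ^ 2 - c ^ 2 * u ^ 2 * (1 - u ^ 2)) / (b * (c * u ^ 2 + 1) ^ ((5:ℝ)/2)) := by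
    apply Continuous.div (by fun_prop)
    · exact continuous_const.mul ((by fun_prop : Continuous fun u : ℝ => c * u ^ 2 + 1).rpow_const
        (fun x => Or.inr (by norm_num)))
    · intro x
      have : (0:ℝ) < c * x ^ 2 + 1 := by positivity
      positivity
  have hint := intervalIntegral.integral_eq_sub_of_hasDerivAt
    (f := F) (a := (0:ℝ)) (b := 1) (fun u _ => key u) (hcont.intervalIntegrable 0 1)
  rw [hint]
  -- evaluate F 1 - F 0
  have hF0 : F 0 = 0 := by
    simp [hF, Real.arsinh_zero]
  have hF1 : F 1 = Real.log (b + Real.sqrt c) / (b * Real.sqrt c) + 1 := by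
    have h1c : 1 + (Real.sqrt c * 1) ^ 2 = b ^ 2 := by
      rw [mul_one, Real.sq_sqrt hc.le]; rw [hb2]; ring
    have harc : Real.arsinh (Real.sqrt c * 1) = Real.log (b + Real.sqrt c) := by
      rw [Real.arsinh, h1c, Real.sqrt_sq hb0.le, mul_one, add_comm]
    have hpow : (c * 1 ^ 2 + 1) ^ ((3:ℝ)/2) = b ^ 3 := by
      have : c * 1 ^ 2 + 1 = b ^ 2 := by rw [hb2]; ring
      rw [this, ← Real.rpow_natCast b 2, ← Real.rpow_mul hb0.le]
      norm_num
    have : ((2 * c + 1) * 1 + c ^ 2 * 1 ^ 3) / (b * (c * 1 ^ 2 + 1) ^ ((3:ℝ)/2)) = 1 := by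
      rw [hpow]
      have hnum : (2 * c + 1) * 1 + c ^ 2 * 1 ^ 3 = b ^ 4 := by nlinarith [hb2]
      rw [hnum]
      field_simp
    simp only [hF]
    rw [harc, this]
  rw [hF0, hF1, sub_zero]
end

section
/- As b tends to 1 from the right, (1/4)·√(1 + Φ(b))·I(b) tends to 1. Consequently, for any real m, the limiting Hayward mass m_∞(b) = (m/4)·√(1 + Φ(b))·I(b) of the ellipsoid family tends to m as b → 1⁺, i.e. the coordinate-sphere case recovers the ADM mass. -/
open Real MeasureTheory Topology Filter

lemma arcsin_div_tendsto : Tendsto (fun x : ℝ => Real.arcsin x / x) (𝓝[≠] (0:ℝ)) (𝓝 1) := by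
  have h := (Real.hasDerivAt_arcsin (by norm_num) (by norm_num) : HasDerivAt Real.arcsin _ 0)
  rw [hasDerivAt_iff_tendsto_slope] at h
  have h' : Tendsto (slope Real.arcsin 0) (𝓝[≠] (0:ℝ)) (𝓝 1) := by
    convert h using 2; norm_num
  refine h'.congr fun x => ?_
  simp [slope_def_field, div_eq_mul_inv]

lemma phi_tendsto : Tendsto Phi (𝓝[>] (1:ℝ)) (𝓝 1) := by
  have ht : Tendsto (fun b : ℝ => Real.sqrt (b ^ 2 - 1) / b) (𝓝[>] (1:ℝ)) (𝓝[≠] (0:ℝ)) := by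
    rw [tendsto_nhdsWithin_iff]
    constructor
    · have h1 : Tendsto (fun b : ℝ => b ^ 2 - 1) (𝓝 (1:ℝ)) (𝓝 0) := by
        have : Continuous (fun b : ℝ => b ^ 2 - 1) := by continuity
        have := this.tendsto (1:ℝ)
        simpa using this
      have h2 : Tendsto (fun b : ℝ => Real.sqrt (b ^ 2 - 1)) (𝓝 (1:ℝ)) (𝓝 0) := by
        have := (Real.continuous_sqrt.tendsto 0).comp h1
        simpa [Function.comp_def] using this
      have h3 := h2.div tendsto_id (one_ne_zero)
      simpa [Pi.div_def] using h3.mono_left nhdsWithin_le_nhds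
    · filter_upwards [self_mem_nhdsWithin] with b hb
      have hb1 : (1:ℝ) < b := hb
      have hs : 0 < Real.sqrt (b ^ 2 - 1) := Real.sqrt_pos.2 (by nlinarith)
      have : 0 < Real.sqrt (b ^ 2 - 1) / b := div_pos hs (by linarith)
      exact Set.mem_setOf.2 (ne_of_gt this)
  have hb1 : Tendsto (fun b : ℝ => b) (𝓝[>] (1:ℝ)) (𝓝 1) := tendsto_id.mono_left nhdsWithin_le_nhds
  have key := hb1.mul (arcsin_div_tendsto.comp ht)
  rw [mul_one] at key
  refine key.congr' ?_
  filter_upwards [self_mem_nhdsWithin] with b hb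
  have hb1 : (1:ℝ) < b := hb
  have hs : 0 < Real.sqrt (b ^ 2 - 1) := Real.sqrt_pos.2 (by nlinarith)
  have hb0 : (0:ℝ) < b := by linarith
  simp only [Function.comp, Phi]
  field_simp

lemma denom_arg_ge (b θ : ℝ) (hb : 1 ≤ b) : 2 ≤ 1 + b ^ 2 + (1 - b ^ 2) * Real.cos (2 * θ) := by
  have h1 := Real.cos_le_one (2 * θ)
  have h2 : 1 ≤ b ^ 2 := by nlinarith
  nlinarith [mul_nonneg (sub_nonneg.2 h2) (sub_nonneg.2 h1)]

lemma denom2_ge (b θ : ℝ) (hb : 1 ≤ b) : 1 ≤ b ^ 2 * Real.cos θ ^ 2 + Real.sin θ ^ 2 := by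
  have h := Real.sin_sq_add_cos_sq θ
  have h2 : 1 ≤ b ^ 2 := by nlinarith
  nlinarith [sq_nonneg (Real.cos θ)]

lemma denom_ge_one (b θ : ℝ) (hb : 1 ≤ b) :
    1 ≤ Real.sqrt (1 + b ^ 2 + (1 - b ^ 2) * Real.cos (2 * θ)) *
        (b ^ 2 * Real.cos θ ^ 2 + Real.sin θ ^ 2) ^ ((5:ℝ) / 2) := by
  have h1 : 1 ≤ Real.sqrt (1 + b ^ 2 + (1 - b ^ 2) * Real.cos (2 * θ)) := by
    have := Real.sqrt_le_sqrt (show (1:ℝ) ≤ 1 + b ^ 2 + (1 - b ^ 2) * Real.cos (2 * θ) by linarith [denom_arg_ge b θ hb])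
    simpa using this
  have h2 : 1 ≤ (b ^ 2 * Real.cos θ ^ 2 + Real.sin θ ^ 2) ^ ((5:ℝ) / 2) :=
    Real.one_le_rpow (denom2_ge b θ hb) (by norm_num)
  nlinarith

lemma cont_integrand (b : ℝ) (hb : 1 ≤ b) :
    Continuous (fun θ : ℝ =>
      ((2 * b ^ 2 - (b ^ 2 - 1) ^ 2 * Real.sin θ ^ 2 * Real.cos θ ^ 2) * Real.sin θ) /
      (Real.sqrt (1 + b ^ 2 + (1 - b ^ 2) * Real.cos (2 * θ)) *
        (b ^ 2 * Real.cos θ ^ 2 + Real.sin θ ^ 2) ^ ((5:ℝ) / 2))) := by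
  apply Continuous.div
  · fun_prop
  · apply Continuous.mul
    · exact Real.continuous_sqrt.comp (by fun_prop)
    · exact Continuous.rpow_const (by fun_prop) (fun θ => Or.inr (by norm_num))
  · intro θ
    have := denom_ge_one b θ hb
    positivity -- might fail; fallback linarith

lemma ellI_tendsto : Tendsto ellI (𝓝[>] (1:ℝ)) (𝓝 (2 * Real.sqrt 2)) := by
  have key : Tendsto ellI (𝓝[>] (1:ℝ)) (𝓝 (∫ θ in (0:ℝ)..Real.pi, Real.sqrt 2 * Real.sin θ)) := by
    apply intervalIntegral.tendsto_integral_filter_of_dominated_convergence (bound := fun _ => (17:ℝ))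
    · -- measurability
      filter_upwards [self_mem_nhdsWithin] with b hb
      exact ((cont_integrand b (le_of_lt hb)).aestronglyMeasurable).restrict
    · -- bound
      filter_upwards [Ioo_mem_nhdsGT_of_mem (Set.left_mem_Ico.2 (by norm_num : (1:ℝ) < 2))] with b hb
      apply ae_of_all
      intro θ
      have hb1 : (1:ℝ) ≤ b := le_of_lt hb.1
      have hb2 : b ≤ 2 := le_of_lt hb.2
      have hden := denom_ge_one b θ hb1
      have hnum : |(2 * b ^ 2 - (b ^ 2 - 1) ^ 2 * Real.sin θ ^ 2 * Real.cos θ ^ 2) * Real.sin θ| ≤ 17 := by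
        rw [abs_mul]
        have hs : |Real.sin θ| ≤ 1 := Real.abs_sin_le_one θ
        have hA : |2 * b ^ 2 - (b ^ 2 - 1) ^ 2 * Real.sin θ ^ 2 * Real.cos θ ^ 2| ≤ 17 := by
          have h9 : (b ^ 2 - 1) ^ 2 ≤ 9 := by
            have h3 : b ^ 2 - 1 ≤ 3 := by nlinarith
            have h0 : (0:ℝ) ≤ b ^ 2 - 1 := by nlinarith
            nlinarith [mul_le_mul h3 h3 h0 (by norm_num : (0:ℝ) ≤ 3)]
          have hsc : Real.sin θ ^ 2 * Real.cos θ ^ 2 ≤ 1 := by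
            nlinarith [Real.sin_sq_le_one θ, Real.cos_sq_le_one θ, sq_nonneg (Real.sin θ), sq_nonneg (Real.cos θ)]
          have hscn : 0 ≤ Real.sin θ ^ 2 * Real.cos θ ^ 2 := by positivity
          have hmul : (b ^ 2 - 1) ^ 2 * (Real.sin θ ^ 2 * Real.cos θ ^ 2) ≤ 9 * 1 :=
            mul_le_mul h9 hsc hscn (by norm_num)
          rw [abs_le]
          constructor
          · nlinarith
          · nlinarith [mul_nonneg (sq_nonneg (b ^ 2 - 1)) hscn]
        calc |2 * b ^ 2 - (b ^ 2 - 1) ^ 2 * Real.sin θ ^ 2 * Real.cos θ ^ 2| * |Real.sin θ|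
            ≤ 17 * 1 := mul_le_mul hA hs (abs_nonneg _) (by norm_num)
          _ = 17 := by norm_num
      have hdenpos : (0:ℝ) < Real.sqrt (1 + b ^ 2 + (1 - b ^ 2) * Real.cos (2 * θ)) *
          (b ^ 2 * Real.cos θ ^ 2 + Real.sin θ ^ 2) ^ ((5:ℝ) / 2) := by linarith
      rw [norm_div, Real.norm_eq_abs, Real.norm_eq_abs, abs_of_nonneg hdenpos.le,
        div_le_iff₀ hdenpos]
      exact fun _ => hnum.trans (le_mul_of_one_le_right (by norm_num) hden)
    · -- bound integrable
      exact intervalIntegrable_const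
    · -- pointwise limit
      apply ae_of_all
      intro θ
      have hcont : ContinuousAt (fun b : ℝ =>
        ((2 * b ^ 2 - (b ^ 2 - 1) ^ 2 * Real.sin θ ^ 2 * Real.cos θ ^ 2) * Real.sin θ) /
        (Real.sqrt (1 + b ^ 2 + (1 - b ^ 2) * Real.cos (2 * θ)) *
          (b ^ 2 * Real.cos θ ^ 2 + Real.sin θ ^ 2) ^ ((5:ℝ) / 2))) 1 := by
        apply ContinuousAt.div
        · fun_prop
        · apply ContinuousAt.mul
          · exact Real.continuous_sqrt.continuousAt.comp (by fun_prop)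
          · exact ContinuousAt.rpow_const (by fun_prop) (Or.inr (by norm_num))
        · have := denom_ge_one 1 θ le_rfl
          simp only [one_pow] at this ⊢
          linarith
      intro _
      have hval : (2 * (1:ℝ) ^ 2 - ((1:ℝ) ^ 2 - 1) ^ 2 * Real.sin θ ^ 2 * Real.cos θ ^ 2) * Real.sin θ /
          (Real.sqrt (1 + (1:ℝ) ^ 2 + (1 - (1:ℝ) ^ 2) * Real.cos (2 * θ)) *
            ((1:ℝ) ^ 2 * Real.cos θ ^ 2 + Real.sin θ ^ 2) ^ ((5:ℝ)/2)) = Real.sqrt 2 * Real.sin θ := by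
        have h2 : (1:ℝ) ^ 2 * Real.cos θ ^ 2 + Real.sin θ ^ 2 = 1 := by
          nlinarith [Real.sin_sq_add_cos_sq θ]
        rw [show (1:ℝ) + 1 ^ 2 + (1 - 1 ^ 2) * Real.cos (2 * θ) = 2 by ring, h2, Real.one_rpow,
          mul_one,
          show (2 * (1:ℝ) ^ 2 - ((1:ℝ) ^ 2 - 1) ^ 2 * Real.sin θ ^ 2 * Real.cos θ ^ 2) *
            Real.sin θ = 2 * Real.sin θ by ring]
        rw [div_eq_iff (by positivity : Real.sqrt 2 ≠ 0), mul_comm (Real.sqrt 2) (Real.sin θ),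
          mul_assoc, Real.mul_self_sqrt (by norm_num)]
        ring
      rw [← hval]
      exact hcont.tendsto.mono_left nhdsWithin_le_nhds
  convert key using 2
  rw [intervalIntegral.integral_const_mul, integral_sin]
  simp [Real.cos_pi]
  ring


/-- As b → 1⁺, (1/4)·√(1+Φ(b))·I(b) → 1; consequently for any m the limiting
Hayward mass (m/4)·√(1+Φ(b))·I(b) tends to the ADM mass m. -/
theorem hayward_limit_tendsto_adm :
    Filter.Tendsto (fun b : ℝ => 1 / 4 * Real.sqrt (1 + Phi b) * ellI b)
      (𝓝[>] (1:ℝ)) (𝓝 (1:ℝ)) ∧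
    ∀ m : ℝ, Filter.Tendsto (fun b : ℝ => m / 4 * Real.sqrt (1 + Phi b) * ellI b)
      (𝓝[>] (1:ℝ)) (𝓝 m) := by
  have hsq : Tendsto (fun b : ℝ => Real.sqrt (1 + Phi b)) (𝓝[>] (1:ℝ)) (𝓝 (Real.sqrt 2)) := by
    have h1 : Tendsto (fun b : ℝ => 1 + Phi b) (𝓝[>] (1:ℝ)) (𝓝 2) := by
      have h0 := (tendsto_const_nhds (x := (1:ℝ)) (f := 𝓝[>] (1:ℝ))).add phi_tendsto
      norm_num at h0
      exact h0
    exact (Real.continuous_sqrt.tendsto 2).comp h1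
  have hmain : Tendsto (fun b : ℝ => 1 / 4 * Real.sqrt (1 + Phi b) * ellI b)
      (𝓝[>] (1:ℝ)) (𝓝 (1:ℝ)) := by
    have h := ((tendsto_const_nhds (x := (1:ℝ)/4) (f := 𝓝[>] (1:ℝ))).mul hsq).mul ellI_tendsto
    have hval : 1 / 4 * Real.sqrt 2 * (2 * Real.sqrt 2) = 1 := by
      have h2 : Real.sqrt 2 * Real.sqrt 2 = 2 := Real.mul_self_sqrt (by norm_num)
      nlinarith
    rwa [hval] at h
  refine ⟨hmain, fun m => ?_⟩
  have h := hmain.const_mul m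
  rw [mul_one] at h
  refine h.congr fun b => ?_
  ring
end

section
/- The definite integral ∫_0^π ((7 − 3·cos(2θ))²·sinθ)/(√2·(5 − 3·cos(2θ))^{5/2}) dθ equals 5/8 + π/(3√3); in particular this value is strictly greater than 1 (so the leading coefficient of the Hawking mass of the ellipsoid family with b = 2 exceeds 1, forcing the Hawking mass to tend to −∞ at spatial infinity). -/
open Real MeasureTheory

/-- Antiderivative of the simplified integrand. -/
noncomputable def Fb (θ : ℝ) : ℝ :=
  -(1/2) * ((Real.sqrt 3)⁻¹ * Real.arcsin (Real.sqrt 3 * Real.cos θ / 2)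
    + Real.cos θ / (2 * Real.sqrt (4 - 3 * Real.cos θ ^ 2))
    + Real.cos θ * (12 - 6 * Real.cos θ ^ 2) /
        (48 * ((4 - 3 * Real.cos θ ^ 2) * Real.sqrt (4 - 3 * Real.cos θ ^ 2))))

lemma ylb (θ : ℝ) : (1:ℝ) ≤ 4 - 3 * Real.cos θ ^ 2 := by
  nlinarith [Real.cos_sq_le_one θ]

lemma sqrt3_lt_two : Real.sqrt 3 < 2 := by
  nlinarith [Real.sq_sqrt (by norm_num : (3:ℝ) ≥ 0), Real.sqrt_nonneg 3]

lemma Fb_deriv (θ : ℝ) :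
    HasDerivAt Fb
      ((5 - 3 * Real.cos θ ^ 2) ^ 2 * Real.sin θ /
        (2 * (4 - 3 * Real.cos θ ^ 2) ^ 2 * Real.sqrt (4 - 3 * Real.cos θ ^ 2))) θ := by
  have hy : (1:ℝ) ≤ 4 - 3 * Real.cos θ ^ 2 := ylb θ
  have hy0 : (0:ℝ) < 4 - 3 * Real.cos θ ^ 2 := by linarith
  have hs0 : (0:ℝ) < Real.sqrt (4 - 3 * Real.cos θ ^ 2) := Real.sqrt_pos.mpr hy0
  have hs2 : Real.sqrt (4 - 3 * Real.cos θ ^ 2) ^ 2 = 4 - 3 * Real.cos θ ^ 2 :=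
    Real.sq_sqrt hy0.le
  have h3 : Real.sqrt 3 < 2 := sqrt3_lt_two
  have h3nn : (0:ℝ) ≤ Real.sqrt 3 := Real.sqrt_nonneg 3
  have h32 : Real.sqrt 3 ^ 2 = 3 := Real.sq_sqrt (by norm_num)
  have h30 : Real.sqrt 3 ≠ 0 := by positivity
  -- inner functions
  have hcos : HasDerivAt Real.cos (-Real.sin θ) θ := Real.hasDerivAt_cos θ
  have hy' : HasDerivAt (fun t => 4 - 3 * Real.cos t ^ 2)
      (6 * Real.cos θ * Real.sin θ) θ := by
    have := ((hcos.pow 2).const_mul (3:ℝ)).const_sub 4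
    refine this.congr_deriv (Eq.symm ?_); ring
  have hsq : HasDerivAt (fun t => Real.sqrt (4 - 3 * Real.cos t ^ 2))
      (1 / (2 * Real.sqrt (4 - 3 * Real.cos θ ^ 2)) * (6 * Real.cos θ * Real.sin θ)) θ :=
    (Real.hasDerivAt_sqrt hy0.ne').comp θ hy'
  set s := Real.sqrt (4 - 3 * Real.cos θ ^ 2) with hsdef
  -- arcsin part
  have hne1 : Real.sqrt 3 * Real.cos θ / 2 ≠ -1 := by
    have := Real.neg_one_le_cos θ; have := Real.cos_le_one θ
    intro h; nlinarith
  have hne2 : Real.sqrt 3 * Real.cos θ / 2 ≠ 1 := by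
    have := Real.neg_one_le_cos θ; have := Real.cos_le_one θ
    intro h; nlinarith
  have hinner : HasDerivAt (fun t => Real.sqrt 3 * Real.cos t / 2)
      (Real.sqrt 3 * (-Real.sin θ) / 2) θ := (hcos.const_mul (Real.sqrt 3)).div_const 2
  have harc : HasDerivAt (fun t => Real.arcsin (Real.sqrt 3 * Real.cos t / 2))
      (1 / Real.sqrt (1 - (Real.sqrt 3 * Real.cos θ / 2) ^ 2)
        * (Real.sqrt 3 * (-Real.sin θ) / 2)) θ :=
    by have := (Real.hasDerivAt_arcsin hne1 hne2).comp θ hinner; exact this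
  have hsqr : Real.sqrt (1 - (Real.sqrt 3 * Real.cos θ / 2) ^ 2) = s / 2 := by
    have h14 : (1 - (Real.sqrt 3 * Real.cos θ / 2) ^ 2) = (4 - 3 * Real.cos θ ^ 2) / 4 := by
      field_simp; nlinarith [h32]
    rw [h14, hsdef, Real.sqrt_div hy0.le, show Real.sqrt 4 = 2 by
      rw [show (4:ℝ) = 2 ^ 2 by norm_num, Real.sqrt_sq (by norm_num : (0:ℝ) ≤ 2)]]
  rw [hsqr] at harc
  have h1 : HasDerivAt (fun t => (Real.sqrt 3)⁻¹ * Real.arcsin (Real.sqrt 3 * Real.cos t / 2))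
      (-Real.sin θ / s) θ := by
    have := harc.const_mul ((Real.sqrt 3)⁻¹)
    refine this.congr_deriv (Eq.symm ?_)
    field_simp
  -- second summand
  have h2 : HasDerivAt (fun t => Real.cos t / (2 * Real.sqrt (4 - 3 * Real.cos t ^ 2)))
      (-2 * Real.sin θ / s ^ 3) θ := by
    have := hcos.div (hsq.const_mul 2) (by positivity)
    refine this.congr_deriv (Eq.symm ?_)
    rw [eq_comm]
    field_simp
    rw [← hsdef]
    linear_combination (-2 * Real.sin θ * s ^ 2) * hs2
  -- third summand
  have hnum : HasDerivAt (fun t => Real.cos t * (12 - 6 * Real.cos t ^ 2))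
      ((-Real.sin θ) * (12 - 6 * Real.cos θ ^ 2)
        + Real.cos θ * (12 * Real.cos θ * Real.sin θ)) θ := by
    have h12 : HasDerivAt (fun t => (12:ℝ) - 6 * Real.cos t ^ 2)
        (12 * Real.cos θ * Real.sin θ) θ := by
      have := ((hcos.pow 2).const_mul (6:ℝ)).const_sub 12
      refine this.congr_deriv (Eq.symm ?_); ring
    exact hcos.mul h12
  have hden : HasDerivAt (fun t => 48 * ((4 - 3 * Real.cos t ^ 2)
      * Real.sqrt (4 - 3 * Real.cos t ^ 2)))
      (48 * ((6 * Real.cos θ * Real.sin θ) * s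
        + (4 - 3 * Real.cos θ ^ 2) * (1 / (2 * s) * (6 * Real.cos θ * Real.sin θ)))) θ :=
    (hy'.mul hsq).const_mul 48
  have h3' : HasDerivAt (fun t => Real.cos t * (12 - 6 * Real.cos t ^ 2) /
      (48 * ((4 - 3 * Real.cos t ^ 2) * Real.sqrt (4 - 3 * Real.cos t ^ 2))))
      (-Real.sin θ / s ^ 5) θ := by
    have := hnum.div hden (by positivity)
    refine this.congr_deriv (Eq.symm ?_)
    rw [eq_comm, ← hs2]
    field_simp
    rw [Real.sqrt_sq hs0.le]
    linear_combination (Real.sin θ * s ^ 2 * (36 * Real.cos θ ^ 2 - 24)) * hs2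
  -- assemble
  have hsum := ((h1.add h2).add h3').const_mul (-(1/2) : ℝ)
  refine hsum.congr_deriv (Eq.symm ?_)
  rw [← hs2, show (5:ℝ) - 3 * Real.cos θ ^ 2 = s ^ 2 + 1 by linarith [hs2]]
  field_simp
  ring

/-- ∫_0^π ((7 − 3 cos 2θ)²·sinθ)/(√2·(5 − 3 cos 2θ)^{5/2}) dθ = 5/8 + π/(3√3),
and this value is strictly greater than 1. -/
theorem hawking_leading_integral_b_two :
    (∫ θ in (0:ℝ)..Real.pi,
        (7 - 3 * Real.cos (2 * θ)) ^ 2 * Real.sin θ /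
          (Real.sqrt 2 * (5 - 3 * Real.cos (2 * θ)) ^ ((5:ℝ) / 2))) =
      5 / 8 + Real.pi / (3 * Real.sqrt 3) ∧
    1 < 5 / 8 + Real.pi / (3 * Real.sqrt 3) := by
  constructor
  · -- rewrite the integrand
    have hEq : ∀ θ : ℝ,
        (7 - 3 * Real.cos (2 * θ)) ^ 2 * Real.sin θ /
          (Real.sqrt 2 * (5 - 3 * Real.cos (2 * θ)) ^ ((5:ℝ) / 2))
        = (5 - 3 * Real.cos θ ^ 2) ^ 2 * Real.sin θ /
            (2 * (4 - 3 * Real.cos θ ^ 2) ^ 2 * Real.sqrt (4 - 3 * Real.cos θ ^ 2)) := by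
      intro θ
      have hy : (1:ℝ) ≤ 4 - 3 * Real.cos θ ^ 2 := ylb θ
      have hy0 : (0:ℝ) < 4 - 3 * Real.cos θ ^ 2 := by linarith
      have hc2 : Real.cos (2 * θ) = 2 * Real.cos θ ^ 2 - 1 := Real.cos_two_mul θ
      have h5 : (5:ℝ) - 3 * Real.cos (2 * θ) = 2 * (4 - 3 * Real.cos θ ^ 2) := by
        rw [hc2]; ring
      have h7 : (7:ℝ) - 3 * Real.cos (2 * θ) = 2 * (5 - 3 * Real.cos θ ^ 2) := by
        rw [hc2]; ring
      have hrp : ((2:ℝ) * (4 - 3 * Real.cos θ ^ 2)) ^ ((5:ℝ)/2)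
          = 4 * Real.sqrt 2 * ((4 - 3 * Real.cos θ ^ 2) ^ 2
              * Real.sqrt (4 - 3 * Real.cos θ ^ 2)) := by
        have h2y : (0:ℝ) < 2 * (4 - 3 * Real.cos θ ^ 2) := by linarith
        rw [show ((5:ℝ)/2) = (2:ℕ) + (1/2 : ℝ) by norm_num,
          Real.rpow_add h2y, Real.rpow_natCast, ← Real.sqrt_eq_rpow,
          Real.sqrt_mul (by norm_num : (0:ℝ) ≤ 2)]
        ring
      rw [h5, h7, hrp]
      have hs2 : (0:ℝ) < Real.sqrt 2 := by positivity
      have hss : Real.sqrt 2 * Real.sqrt 2 = 2 := Real.mul_self_sqrt (by norm_num)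
      have hsy : (0:ℝ) < Real.sqrt (4 - 3 * Real.cos θ ^ 2) := Real.sqrt_pos.mpr hy0
      field_simp
      linear_combination (-4 * (5 - 3 * Real.cos θ ^ 2) ^ 2 * Real.sin θ) * hss
    have hcongr : (∫ θ in (0:ℝ)..Real.pi,
        (7 - 3 * Real.cos (2 * θ)) ^ 2 * Real.sin θ /
          (Real.sqrt 2 * (5 - 3 * Real.cos (2 * θ)) ^ ((5:ℝ) / 2)))
      = ∫ θ in (0:ℝ)..Real.pi,
          (5 - 3 * Real.cos θ ^ 2) ^ 2 * Real.sin θ /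
            (2 * (4 - 3 * Real.cos θ ^ 2) ^ 2 * Real.sqrt (4 - 3 * Real.cos θ ^ 2)) := by
      apply intervalIntegral.integral_congr
      intro θ _; exact hEq θ
    rw [hcongr]
    have hcont : Continuous (fun θ : ℝ =>
        (5 - 3 * Real.cos θ ^ 2) ^ 2 * Real.sin θ /
          (2 * (4 - 3 * Real.cos θ ^ 2) ^ 2 * Real.sqrt (4 - 3 * Real.cos θ ^ 2))) := by
      apply Continuous.div
      · continuity
      · continuity
      · intro x
        have hy : (1:ℝ) ≤ 4 - 3 * Real.cos x ^ 2 := ylb x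
        have hy0 : (0:ℝ) < 4 - 3 * Real.cos x ^ 2 := by linarith
        have hsy : (0:ℝ) < Real.sqrt (4 - 3 * Real.cos x ^ 2) := Real.sqrt_pos.mpr hy0
        positivity
    rw [intervalIntegral.integral_eq_sub_of_hasDerivAt
      (fun θ _ => Fb_deriv θ) (hcont.intervalIntegrable 0 Real.pi)]
    -- evaluate
    have harc : Real.arcsin (Real.sqrt 3 / 2) = Real.pi / 3 := by
      rw [← Real.sin_pi_div_three]
      exact Real.arcsin_sin (by linarith [Real.pi_pos]) (by linarith [Real.pi_pos])
    have h30 : Real.sqrt 3 ≠ 0 := by positivity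
    simp only [Fb, Real.cos_pi, Real.cos_zero]
    norm_num
    rw [neg_div, Real.arcsin_neg, harc]
    field_simp
    ring
  · -- the inequality
    have h3 : Real.sqrt 3 < 2 := sqrt3_lt_two
    have h30 : (0:ℝ) < Real.sqrt 3 := by positivity
    have hpi : (3:ℝ) < Real.pi := Real.pi_gt_three
    have : (3:ℝ)/8 < Real.pi / (3 * Real.sqrt 3) := by
      rw [lt_div_iff₀ (by positivity)]
      nlinarith
    linarith
end

section
/- Under the stated asymptotic flatness assumption on λ, there exist constants C > 0 and a₀ > R₀ such that for all a ≥ a₀ and all θ ∈ [0,π]: |a·sinθ·√(g₂₂(a,θ)) − a²·sinθ·√(1 + (b²−1)·sin²θ) − m·a·(b²−1)²·cos²θ·sin³θ·√(1 + b² − (b²−1)·cos(2θ))/(√2·ρ(θ)·(b² + (b²−1)²·cos²θ·sin²θ))| ≤ C. That is, the area form of the ellipsoid x₁²+x₂²+x₃²/b² = a² has the expansion dσ = a²·sinθ·√((1+b²+(1−b²)cos 2θ)/2) dθ∧dφ + m·a·(b²−1)²·cos²θ·√(1+b²−(b²−1)cos 2θ)·sin³θ/(√2·√(b²cos²θ+sin²θ)·(b²+(b²−1)²cos²θ·sin²θ))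 dθ∧dφ + O(1) dθ∧dφ, uniformly in θ. -/
open Real MeasureTheory

/-- ρ(θ) = √(sin²θ + b²·cos²θ). -/
noncomputable def rho (b θ : ℝ) : ℝ :=
  Real.sqrt (Real.sin θ ^ 2 + b ^ 2 * Real.cos θ ^ 2)

/-- The g₂₂ metric component of the ellipsoid x₁²+x₂²+x₃²/b² = a² in the metric
e^{λ(R)}dR² + R²(dΘ² + sin²Θ dφ²). -/
noncomputable def gTwoTwo (b : ℝ) (lam : ℝ → ℝ) (a θ : ℝ) : ℝ :=
  a ^ 2 * (b ^ 2 +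
      Real.exp (lam (a * rho b θ)) * (b ^ 2 - 1) ^ 2 * Real.cos θ ^ 2 * Real.sin θ ^ 2)
    / rho b θ ^ 2

private lemma aux_one_le_of_sq {x : ℝ} (h0 : 0 ≤ x) (h1 : 1 ≤ x ^ 2) : 1 ≤ x := by
  nlinarith

private lemma aux_one_le_mul {x y : ℝ} (hx : 1 ≤ x) (hy : 1 ≤ y) : 1 ≤ x * y := by
  nlinarith

private lemma aux_K_le {Z x y : ℝ} (hZ : 0 ≤ Z) (hx : x ≤ 1) (hy : y ≤ 1)
    (hx0 : 0 ≤ x) (hy0 : 0 ≤ y) : Z * x * y ≤ Z := by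
  nlinarith [mul_le_mul_of_nonneg_left (mul_le_one₀ hx hy0 hy) hZ]

private lemma aux_sq_bound {b K : ℝ} (hb : 1 < b) (hK : K ≤ (b^2-1)^2) :
    b^2 + K ≤ (b + (b^2-1)^2)^2 := by
  nlinarith [sq_nonneg (b^2-1), mul_nonneg (sq_nonneg (b^2-1)) (by linarith : (0:ℝ) ≤ b),
    sq_nonneg ((b^2-1)^2)]

private lemma aux_self_le_sq {R : ℝ} (h : 1 ≤ R) : R ≤ R ^ 2 := by nlinarith

private lemma aux_f1 {a s K Z ρ : ℝ} (ha : 0 < a) (hs0 : 0 ≤ s) (hs1 : s ≤ 1)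
    (hK0 : 0 ≤ K) (hKb : K ≤ Z) (hZ : 0 ≤ Z) (hρ : 1 ≤ ρ) :
    a * s * K ≤ a * Z * ρ := by
  nlinarith [mul_le_mul_of_nonneg_left hs1 (mul_nonneg ha.le hK0),
    mul_le_mul_of_nonneg_left hKb ha.le,
    mul_le_mul_of_nonneg_left hρ (mul_nonneg ha.le hZ)]

private lemma aux_den {x y z w : ℝ} (hx : 1 ≤ x) (hy : 1 ≤ y) (hz : 1 ≤ z) (hw : 1 ≤ w) :
    1 ≤ x * y * (z + w) := by
  have hxy : 1 ≤ x * y := by nlinarith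
  have h := mul_le_mul hxy (by linarith : (1:ℝ) ≤ z + w) one_pos.le (by linarith : (0:ℝ) ≤ x * y)
  nlinarith [h]

set_option maxHeartbeats 1000000 in
/-- Expansion of the area form of the ellipsoid: uniformly in θ ∈ [0,π],
√(det σ) = a²·sinθ·√(1+(b²−1)sin²θ)
  + m·a·(b²−1)²·cos²θ·sin³θ·√(1+b²−(b²−1)cos 2θ)/(√2·ρ(θ)·(b²+(b²−1)²cos²θ·sin²θ))
  + O(1). -/
theorem area_form_expansion (b m R₀ C₀ : ℝ) (lam : ℝ → ℝ)
    (hb : 1 < b) (hm : 0 < m) (hR₀ : 0 < R₀) (hC₀ : 0 < C₀)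
    (hlam : ∀ R, R₀ < R → |Real.exp (lam R) - 1 - 2 * m / R| ≤ C₀ / R ^ 2) :
    ∃ C > 0, ∃ a₀ > R₀, ∀ a ≥ a₀, ∀ θ ∈ Set.Icc (0:ℝ) Real.pi,
      |a * Real.sin θ * Real.sqrt (gTwoTwo b lam a θ) -
          a ^ 2 * Real.sin θ * Real.sqrt (1 + (b ^ 2 - 1) * Real.sin θ ^ 2) -
          m * a * (b ^ 2 - 1) ^ 2 * Real.cos θ ^ 2 * Real.sin θ ^ 3 *
            Real.sqrt (1 + b ^ 2 - (b ^ 2 - 1) * Real.cos (2 * θ)) /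
            (Real.sqrt 2 * rho b θ *
              (b ^ 2 + (b ^ 2 - 1) ^ 2 * Real.cos θ ^ 2 * Real.sin θ ^ 2))| ≤ C := by
  have hb0 : (0:ℝ) < b := lt_trans one_pos hb
  have hb1 : (0:ℝ) < b ^ 2 - 1 := by nlinarith
  have hbK : (0:ℝ) ≤ b + (b^2-1)^2 := by linarith only [sq_nonneg (b^2-1), hb0]
  refine ⟨(b^2-1)^2 * ((b + (b^2-1)^2) * C₀ + m * (C₀ + 2*m) * (b^2-1)^2) + 1, ?_, max R₀ 1 + 1, ?_, ?_⟩
  · have h2 : (0:ℝ) ≤ (b + (b^2-1)^2) * C₀ := mul_nonneg hbK hC₀.le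
    have h3 : (0:ℝ) ≤ m * (C₀ + 2*m) * (b^2-1)^2 :=
      mul_nonneg (mul_nonneg hm.le (by linarith only [hC₀, hm])) (sq_nonneg _)
    have := mul_nonneg (sq_nonneg (b^2-1)) (add_nonneg h2 h3)
    linarith only [this]
  · have := le_max_left R₀ 1; linarith only [this]
  intro a ha θ hθ
  obtain ⟨hθ0, hθπ⟩ := hθ
  have ha1 : (1:ℝ) ≤ a := by have := le_max_right R₀ 1; linarith only [this, ha]
  have haR : R₀ < a := by have := le_max_left R₀ 1; linarith only [this, ha, hR₀]
  have ha0 : (0:ℝ) < a := by linarith only [ha1]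
  obtain ⟨s, hsdef⟩ : ∃ x : ℝ, x = Real.sin θ := ⟨_, rfl⟩
  obtain ⟨c, hcdef⟩ : ∃ x : ℝ, x = Real.cos θ := ⟨_, rfl⟩
  obtain ⟨ρ, hρdef⟩ : ∃ x : ℝ, x = rho b θ := ⟨_, rfl⟩
  rw [← hsdef, ← hcdef, ← hρdef]
  have hsc : s ^ 2 + c ^ 2 = 1 := by rw [hsdef, hcdef]; exact Real.sin_sq_add_cos_sq θ
  have hs0 : 0 ≤ s := by rw [hsdef]; exact Real.sin_nonneg_of_nonneg_of_le_pi hθ0 hθπ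
  have hs1 : s ≤ 1 := by rw [hsdef]; exact Real.sin_le_one θ
  have hc2 : c ^ 2 ≤ 1 := by linarith only [sq_nonneg s, hsc]
  have hs2 : s ^ 2 ≤ 1 := by linarith only [sq_nonneg c, hsc]
  have hρnn : (0:ℝ) ≤ s ^ 2 + b ^ 2 * c ^ 2 := by positivity
  have hρ0 : 0 ≤ ρ := by rw [hρdef, rho]; exact Real.sqrt_nonneg _
  have hρsq : ρ ^ 2 = s ^ 2 + b ^ 2 * c ^ 2 := by
    rw [hρdef, rho, ← hsdef, ← hcdef]; exact Real.sq_sqrt hρnn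
  obtain ⟨R, hRdef⟩ : ∃ x : ℝ, x = a * ρ := ⟨_, rfl⟩
  obtain ⟨E, hEdef⟩ : ∃ x : ℝ, x = Real.exp (lam R) := ⟨_, rfl⟩
  have hE0 : 0 < E := by rw [hEdef]; exact Real.exp_pos _
  obtain ⟨K, hKdef⟩ : ∃ x : ℝ, x = (b^2-1)^2 * c^2 * s^2 := ⟨_, rfl⟩
  rw [← hKdef]
  have hK0 : 0 ≤ K := by rw [hKdef]; positivity
  obtain ⟨S, hSdef⟩ : ∃ x : ℝ, x = Real.sqrt (b^2 + K) := ⟨_, rfl⟩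
  obtain ⟨SE, hSEdef⟩ : ∃ x : ℝ, x = Real.sqrt (b^2 + E*K) := ⟨_, rfl⟩
  have hS0 : 0 ≤ S := by rw [hSdef]; exact Real.sqrt_nonneg _
  have hSE0 : 0 ≤ SE := by rw [hSEdef]; exact Real.sqrt_nonneg _
  have hSsq : S ^ 2 = b^2 + K := by
    rw [hSdef]; exact Real.sq_sqrt (add_nonneg (sq_nonneg b) hK0)
  have hSEsq : SE ^ 2 = b^2 + E*K := by
    rw [hSEdef]; exact Real.sq_sqrt (add_nonneg (sq_nonneg b) (mul_nonneg hE0.le hK0))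
  have hKb : K ≤ (b^2-1)^2 := by
    rw [hKdef]; exact aux_K_le (sq_nonneg _) hc2 hs2 (sq_nonneg _) (sq_nonneg _)
  have hSub : S ≤ b + (b^2-1)^2 := by
    have h := Real.sqrt_le_sqrt (aux_sq_bound hb hKb)
    calc S ≤ Real.sqrt ((b + (b^2-1)^2)^2) := hSdef ▸ h
      _ = b + (b^2-1)^2 := Real.sqrt_sq hbK
  have hρ1 : 1 ≤ ρ := by
    refine aux_one_le_of_sq hρ0 ?_
    have h := mul_nonneg hb1.le (sq_nonneg c)
    have : ρ ^ 2 = 1 + (b^2-1) * c^2 := by rw [hρsq]; linear_combination hsc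
    linarith only [this, h]
  have hρpos : (0:ℝ) < ρ := lt_of_lt_of_le one_pos hρ1
  have hρne : ρ ≠ 0 := hρpos.ne'
  have hg : Real.sqrt (gTwoTwo b lam a θ) = a * SE / ρ := by
    have h1 : gTwoTwo b lam a θ = (a * SE / ρ) ^ 2 := by
      simp only [gTwoTwo]
      rw [← hsdef, ← hcdef, ← hρdef, ← hRdef, ← hEdef, div_pow, mul_pow, hSEsq, hKdef]
      ring
    rw [h1, Real.sqrt_sq (div_nonneg (mul_nonneg ha0.le hSE0) hρ0)]
  have h2 : Real.sqrt (1 + (b ^ 2 - 1) * s ^ 2) = S / ρ := by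
    have h1 : 1 + (b ^ 2 - 1) * s ^ 2 = (S / ρ) ^ 2 := by
      rw [div_pow, hSsq, eq_div_iff (pow_ne_zero 2 hρne), hρsq, hKdef]
      have hcc : c ^ 2 = 1 - s ^ 2 := by linarith only [hsc]
      rw [hcc]; ring
    rw [h1, Real.sqrt_sq (div_nonneg hS0 hρ0)]
  have h3 : Real.sqrt (1 + b ^ 2 - (b ^ 2 - 1) * Real.cos (2 * θ)) = Real.sqrt 2 * S / ρ := by
    have h1 : 1 + b ^ 2 - (b ^ 2 - 1) * Real.cos (2 * θ) = (Real.sqrt 2 * S / ρ) ^ 2 := by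
      rw [Real.cos_two_mul, ← hcdef, div_pow, mul_pow,
        Real.sq_sqrt (by norm_num : (0:ℝ) ≤ 2), hSsq, eq_div_iff (pow_ne_zero 2 hρne),
        hρsq, hKdef]
      have hcc : c ^ 2 = 1 - s ^ 2 := by linarith only [hsc]
      rw [hcc]; ring
    rw [h1, Real.sqrt_sq (by positivity)]
  have hR1 : 1 ≤ R := by rw [hRdef]; exact aux_one_le_mul ha1 hρ1
  have hRR₀ : R₀ < R := by
    have h := le_mul_of_one_le_right ha0.le hρ1
    rw [hRdef]; linarith only [h, haR]
  have hR0 : (0:ℝ) < R := by linarith only [hR1]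
  have hd := hlam R hRR₀
  rw [← hEdef] at hd
  have hS1 : 1 ≤ S := aux_one_le_of_sq hS0 (by rw [hSsq]; linarith only [hb1, hK0])
  have hSE1 : 1 ≤ SE := aux_one_le_of_sq hSE0
    (by rw [hSEsq]; linarith only [hb1, mul_nonneg hE0.le hK0])
  have hSne : S ≠ 0 := (lt_of_lt_of_le one_pos hS1).ne'
  have hSESne : SE + S ≠ 0 :=
    (show (0:ℝ) < SE + S by linarith only [hSE1, hS1]).ne'
  rw [hg, h2, h3]
  have hSE_S : SE - S = (E - 1) * K / (SE + S) := by
    rw [eq_div_iff hSESne]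
    linear_combination hSEsq - hSsq
  obtain ⟨N, hNdef⟩ : ∃ x : ℝ, x = a * (E - 1) * ρ * S - m * (SE + S) := ⟨_, rfl⟩
  have hT : a * s * (a * SE / ρ) - a ^ 2 * s * (S / ρ) -
      m * a * (b ^ 2 - 1) ^ 2 * c ^ 2 * s ^ 3 * (Real.sqrt 2 * S / ρ) /
        (Real.sqrt 2 * ρ * (b ^ 2 + K)) =
      (a * s * K / ρ) * (N / (ρ * S * (SE + S))) := by
    have h2ne : Real.sqrt 2 ≠ 0 := by positivity
    have hthird : m * a * (b ^ 2 - 1) ^ 2 * c ^ 2 * s ^ 3 * (Real.sqrt 2 * S / ρ) /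
        (Real.sqrt 2 * ρ * (b ^ 2 + K)) = m * a * s * K / (ρ^2 * S) := by
      rw [← hSsq, hKdef]
      field_simp
    rw [hthird]
    have h1 : a * s * (a * SE / ρ) - a ^ 2 * s * (S / ρ) = (a^2 * s / ρ) * (SE - S) := by
      field_simp
    rw [h1, hSE_S, hNdef]
    field_simp
  rw [hT]
  have hE1 : |E - 1| ≤ (C₀ + 2*m) / R := by
    have h2m : |(2:ℝ)*m/R| = 2*m/R := abs_of_pos (div_pos (by linarith only [hm]) hR0)
    have hstep : C₀/R^2 ≤ C₀/R := div_le_div₀ hC₀.le le_rfl hR0 (aux_self_le_sq hR1)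
    calc |E - 1| = |(E - 1 - 2*m/R) + 2*m/R| := by rw [sub_add_cancel]
      _ ≤ |E - 1 - 2*m/R| + |2*m/R| := abs_add_le _ _
      _ ≤ C₀/R^2 + 2*m/R := by rw [h2m]; linarith only [hd]
      _ ≤ C₀/R + 2*m/R := by linarith only [hstep]
      _ = (C₀ + 2*m)/R := by ring
  have hNsplit : N = (a * ρ * S) * (E - 1 - 2*m/R) + m * (S - SE) := by
    rw [hNdef, hRdef]
    field_simp
    ring
  have haR' : a ≤ R := by
    have h := le_mul_of_one_le_right ha0.le hρ1
    rw [hRdef]; linarith only [h]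
  have hpart1 : |(a * ρ * S) * (E - 1 - 2*m/R)| ≤ (b + (b^2-1)^2) * C₀ / a := by
    rw [abs_mul, abs_of_nonneg (mul_nonneg (mul_nonneg ha0.le hρ0) hS0)]
    calc (a * ρ * S) * |E - 1 - 2*m/R| ≤ (a * ρ * S) * (C₀ / R^2) :=
          mul_le_mul_of_nonneg_left hd (mul_nonneg (mul_nonneg ha0.le hρ0) hS0)
      _ = S * C₀ / R := by rw [hRdef]; field_simp
      _ ≤ (b + (b^2-1)^2) * C₀ / a :=
          div_le_div₀ (mul_nonneg hbK hC₀.le)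
            (mul_le_mul_of_nonneg_right hSub hC₀.le) ha0 haR'
  have hpart2 : |S - SE| ≤ (C₀ + 2*m) * (b^2-1)^2 / a := by
    have heq : |S - SE| = |E - 1| * K / (SE + S) := by
      rw [abs_sub_comm, hSE_S, abs_div, abs_mul, abs_of_nonneg hK0,
        abs_of_pos (show (0:ℝ) < SE + S by linarith only [hSE1, hS1])]
    rw [heq]
    have hCm : (0:ℝ) ≤ C₀ + 2*m := by linarith only [hC₀, hm]
    calc |E - 1| * K / (SE + S) ≤ ((C₀ + 2*m)/R) * (b^2-1)^2 / 1 := by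
          refine div_le_div₀ (mul_nonneg (div_nonneg hCm hR0.le) (sq_nonneg _)) ?_
            one_pos (by linarith only [hSE1, hS1])
          exact mul_le_mul hE1 hKb hK0 (div_nonneg hCm hR0.le)
      _ = (C₀ + 2*m) * (b^2-1)^2 / R := by ring
      _ ≤ (C₀ + 2*m) * (b^2-1)^2 / a :=
          div_le_div₀ (mul_nonneg hCm (sq_nonneg _)) le_rfl ha0 haR'
  have hNbound : |N| ≤ ((b + (b^2-1)^2) * C₀ + m * (C₀ + 2*m) * (b^2-1)^2) / a := by
    rw [hNsplit]
    calc |(a * ρ * S) * (E - 1 - 2*m/R) + m * (S - SE)|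
        ≤ |(a * ρ * S) * (E - 1 - 2*m/R)| + |m * (S - SE)| := abs_add_le _ _
      _ ≤ (b + (b^2-1)^2) * C₀ / a + m * ((C₀ + 2*m) * (b^2-1)^2 / a) := by
          rw [abs_mul m (S - SE), abs_of_pos hm]
          have := mul_le_mul_of_nonneg_left hpart2 hm.le
          linarith only [hpart1, this]
      _ = ((b + (b^2-1)^2) * C₀ + m * (C₀ + 2*m) * (b^2-1)^2) / a := by ring
  have hB0 : 0 ≤ (b + (b^2-1)^2) * C₀ + m * (C₀ + 2*m) * (b^2-1)^2 := by
    have h2 : (0:ℝ) ≤ (b + (b^2-1)^2) * C₀ := mul_nonneg hbK hC₀.le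
    have h3 : (0:ℝ) ≤ m * (C₀ + 2*m) * (b^2-1)^2 :=
      mul_nonneg (mul_nonneg hm.le (by linarith only [hC₀, hm])) (sq_nonneg _)
    linarith only [h2, h3]
  have hf1 : a * s * K / ρ ≤ a * (b^2-1)^2 := by
    rw [div_le_iff₀ hρpos]
    exact aux_f1 ha0 hs0 hs1 hK0 hKb (sq_nonneg _) hρ1
  have hf2 : |N| / (ρ * S * (SE + S)) ≤
      ((b + (b^2-1)^2) * C₀ + m * (C₀ + 2*m) * (b^2-1)^2) / a := by
    have hden : (1:ℝ) ≤ ρ * S * (SE + S) := aux_den hρ1 hS1 hSE1 hS1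
    calc |N| / (ρ * S * (SE + S)) ≤ |N| / 1 :=
          div_le_div₀ (abs_nonneg _) le_rfl one_pos hden
      _ = |N| := div_one _
      _ ≤ _ := hNbound
  rw [abs_mul, abs_of_nonneg (div_nonneg (mul_nonneg (mul_nonneg ha0.le hs0) hK0) hρ0),
    abs_div, abs_of_nonneg (mul_nonneg (mul_nonneg hρ0 hS0) (show (0:ℝ) ≤ SE + S by linarith only [hSE1, hS1]))]
  calc (a * s * K / ρ) * (|N| / (ρ * S * (SE + S)))
      ≤ (a * (b^2-1)^2) * (((b + (b^2-1)^2) * C₀ + m * (C₀ + 2*m) * (b^2-1)^2) / a) := by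
        refine mul_le_mul hf1 hf2
          (div_nonneg (abs_nonneg _)
            (mul_nonneg (mul_nonneg hρ0 hS0) (show (0:ℝ) ≤ SE + S by linarith only [hSE1, hS1])))
          (mul_nonneg ha0.le (sq_nonneg _))
    _ = (b^2-1)^2 * ((b + (b^2-1)^2) * C₀ + m * (C₀ + 2*m) * (b^2-1)^2) := by
        field_simp
    _ ≤ (b^2-1)^2 * ((b + (b^2-1)^2) * C₀ + m * (C₀ + 2*m) * (b^2-1)^2) + 1 := by linarith only []
end
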